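/- Let X be a random variable with mean zero satisfying E[e^{θ₀ X}] < ∞ for some θ₀ > 0 and E[(X⁻)²] < ∞. Then the log-moment generating function L(θ) = log E[e^{θX}] satisfies: for every θ₁ ∈ (0, θ₀), there is a constant K (depending only on θ₀, θ₁, E[e^{θ₀X}], and E[(X⁻)²]) such that L(θ) ≤ Kθ²/2 for all θ ∈ [0, θ₁]. -/

import Mathlib

open MeasureTheory ProbabilityTheory Set

lemma expand_g : Monotone (fun u : ℝ => Real.exp u - 1 - u - u^2/2) := by
  have hd : ∀ u : ℝ, HasDerivAt (fun u : ℝ => Real.exp u - 1 - u - u^2/2)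
      (Real.exp u - 1 - u) u := by
    intro u
    have h1 := ((Real.hasDerivAt_exp u).sub_const 1).sub (hasDerivAt_id u)
    have h2 := (hasDerivAt_pow 2 u).div_const 2
    have := h1.sub h2
    refine this.congr_deriv ?_
    simp
  apply monotone_of_deriv_nonneg
  · exact fun u => (hd u).differentiableAt
  · intro u
    rw [(hd u).deriv]
    nlinarith [Real.add_one_le_exp u]

lemma exp_le_quad (u : ℝ) (hu : u ≤ 0) : Real.exp u ≤ 1 + u + u^2/2 := by
  have := expand_g hu
  simp only [Real.exp_zero] at this
  nlinarith

lemma exp_le_quad' (u : ℝ) (hu : 0 ≤ u) :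
    Real.exp u ≤ 1 + u + u^2/2 * Real.exp u := by
  have hh : Monotone (fun u : ℝ => 1 + u + u^2/2 * Real.exp u - Real.exp u) := by
    have hd : ∀ u : ℝ, HasDerivAt (fun u : ℝ => 1 + u + u^2/2 * Real.exp u - Real.exp u)
        (1 + (u * Real.exp u + u^2/2 * Real.exp u) - Real.exp u) u := by
      intro u
      have h2 : HasDerivAt (fun u : ℝ => u^2/2) u u := by
        have := (hasDerivAt_pow 2 u).div_const 2
        refine this.congr_deriv ?_; simp
      have h3 := h2.mul (Real.hasDerivAt_exp u)
      have h4 := ((hasDerivAt_const u (1:ℝ)).add (hasDerivAt_id u)).add h3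
      have := h4.sub (Real.hasDerivAt_exp u)
      refine this.congr_deriv ?_
      ring
    apply monotone_of_deriv_nonneg
    · exact fun u => (hd u).differentiableAt
    · intro u
      rw [(hd u).deriv]
      have h1 : 1 + (-u - u^2/2) ≤ Real.exp (-u - u^2/2) := by
        linarith [Real.add_one_le_exp (-u - u^2/2)]
      have h2 : Real.exp u * Real.exp (-u - u^2/2) = Real.exp (-u^2/2) := by
        rw [← Real.exp_add]; ring_nf
      have h3 : Real.exp (-u^2/2) ≤ 1 := Real.exp_le_one_iff.mpr (by nlinarith)
      nlinarith [Real.exp_pos u]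
  have := hh hu
  simp only [Real.exp_zero] at this
  nlinarith

/-- For a centered random variable with `E e^{θ₀X} < ∞` and `E (X⁻)² < ∞`, the
log-mgf satisfies `L(θ) ≤ Kθ²/2` on `[0, θ₁]`, for each `θ₁ < θ₀`. -/
theorem logMGF_quadratic_bound {Ω : Type*} [MeasureSpace Ω]
    [IsProbabilityMeasure (volume : Measure Ω)]
    (X : Ω → ℝ) (hX : Measurable X) (θ₀ : ℝ) (hθ₀ : 0 < θ₀)
    (hmean : ∫ ω, X ω = 0)
    (hexp : Integrable (fun ω => Real.exp (θ₀ * X ω)))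
    (hsq : Integrable (fun ω => (max (-(X ω)) 0) ^ 2)) :
    ∀ θ₁ : ℝ, 0 < θ₁ → θ₁ < θ₀ →
      ∃ K : ℝ, ∀ θ ∈ Set.Icc (0 : ℝ) θ₁,
        Real.log (∫ ω, Real.exp (θ * X ω)) ≤ K * θ ^ 2 / 2 := by
  intro θ₁ hθ₁ hθ₁₀
  set δ : ℝ := θ₀ - θ₁ with hδdef
  have hδ : 0 < δ := by simp [hδdef]; linarith
  set C : ℝ := 4 / δ ^ 2 with hCdef
  have hCpos : 0 < C := by positivity
  -- x² ≤ C e^{δx} for x ≥ 0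
  have hCx : ∀ x : ℝ, 0 ≤ x → x ^ 2 ≤ C * Real.exp (δ * x) := by
    intro x hx
    have h1 : δ * x / 2 + 1 ≤ Real.exp (δ * x / 2) := Real.add_one_le_exp _
    have h2 : Real.exp (δ * x / 2) * Real.exp (δ * x / 2) = Real.exp (δ * x) := by
      rw [← Real.exp_add]; ring_nf
    have hC4 : C * δ ^ 2 = 4 := by
      rw [hCdef]; field_simp
    have h0 : 0 ≤ δ * x / 2 + 1 := by nlinarith [mul_nonneg hδ.le hx]
    have h1' : (δ * x / 2 + 1) * (δ * x / 2 + 1)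
        ≤ Real.exp (δ * x / 2) * Real.exp (δ * x / 2) :=
      mul_le_mul h1 h1 h0 (Real.exp_pos _).le
    have he : δ ^ 2 * x ^ 2 / 4 ≤ Real.exp (δ * x) := by nlinarith [mul_nonneg hδ.le hx]
    have hA := mul_le_mul_of_nonneg_left he hCpos.le
    have hid : C * (δ ^ 2 * x ^ 2 / 4) = x ^ 2 := by
      rw [hCdef]; field_simp
    linarith
  -- dominating function
  set G : Ω → ℝ := fun ω => (max (-(X ω)) 0) ^ 2 + C * Real.exp (θ₀ * X ω) with hGdef
  have hG : Integrable G := hsq.add (hexp.const_mul C)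
  -- X is integrable
  have hXint : Integrable X := by
    refine Integrable.mono' (((integrable_const (1:ℝ)).add hsq).add (hexp.div_const θ₀))
      hX.aestronglyMeasurable (Filter.Eventually.of_forall fun ω => ?_)
    simp only [Pi.add_apply, Real.norm_eq_abs]
    rcases le_or_gt (X ω) 0 with h | h
    · have h1 : max (-(X ω)) 0 = -(X ω) := max_eq_left (by linarith)
      have h2 : |X ω| = -(X ω) := abs_of_nonpos h
      have h3 : (0:ℝ) < Real.exp (θ₀ * X ω) / θ₀ := by positivity
      nlinarith [sq_nonneg (X ω + 1)]
    · have h2 : |X ω| = X ω := abs_of_pos h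
      have h3 : θ₀ * X ω ≤ Real.exp (θ₀ * X ω) := by
        linarith [Real.add_one_le_exp (θ₀ * X ω)]
      have h4 : X ω ≤ Real.exp (θ₀ * X ω) / θ₀ := by
        rw [le_div_iff₀ hθ₀]; linarith [mul_comm θ₀ (X ω)]
      have h5 : (0:ℝ) ≤ (max (-(X ω)) 0) ^ 2 := by positivity
      linarith
  set B : ℝ := ∫ ω, G ω with hBdef
  have hBnn : 0 ≤ B := integral_nonneg fun ω => by positivity
  refine ⟨B, fun θ hθ => ?_⟩
  obtain ⟨hθ0, hθle⟩ := hθ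
  -- integrability of exp(θX)
  have hexpθ : Integrable (fun ω => Real.exp (θ * X ω)) := by
    refine Integrable.mono' ((integrable_const (1:ℝ)).add hexp)
      (hX.const_mul θ).exp.aestronglyMeasurable (Filter.Eventually.of_forall fun ω => ?_)
    simp only [Pi.add_apply, Real.norm_eq_abs]
    rw [abs_of_pos (Real.exp_pos _)]
    rcases le_or_gt 0 (X ω) with h | h
    · have : θ * X ω ≤ θ₀ * X ω := by nlinarith
      have := Real.exp_le_exp.mpr this
      linarith
    · have : θ * X ω ≤ 0 := mul_nonpos_of_nonneg_of_nonpos hθ0 h.le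
      have := Real.exp_le_one_iff.mpr this
      linarith [Real.exp_pos (θ₀ * X ω)]
  -- pointwise bound
  have hpt : ∀ ω, Real.exp (θ * X ω) ≤ 1 + θ * X ω + θ ^ 2 / 2 * G ω := by
    intro ω
    rcases le_or_gt 0 (X ω) with h | h
    · have hA := exp_le_quad' (θ * X ω) (mul_nonneg hθ0 h)
      have hB1 : (X ω) ^ 2 * Real.exp (θ * X ω) ≤ C * Real.exp (θ₀ * X ω) := by
        have h1 : (X ω) ^ 2 * Real.exp (θ * X ω)
            ≤ C * Real.exp (δ * X ω) * Real.exp (θ * X ω) :=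
          mul_le_mul_of_nonneg_right (hCx _ h) (Real.exp_pos _).le
        have h2 : Real.exp (δ * X ω) * Real.exp (θ * X ω) = Real.exp ((δ + θ) * X ω) := by
          rw [← Real.exp_add]; ring_nf
        have h3 : Real.exp ((δ + θ) * X ω) ≤ Real.exp (θ₀ * X ω) := by
          apply Real.exp_le_exp.mpr
          apply mul_le_mul_of_nonneg_right _ h
          linarith
        calc (X ω) ^ 2 * Real.exp (θ * X ω)
            ≤ C * (Real.exp (δ * X ω) * Real.exp (θ * X ω)) := by linarith [h1]; 
          _ = C * Real.exp ((δ + θ) * X ω) := by rw [h2]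
          _ ≤ C * Real.exp (θ₀ * X ω) := by nlinarith
      have h5 : (0:ℝ) ≤ (max (-(X ω)) 0) ^ 2 := by positivity
      have h6 : (θ * X ω) ^ 2 / 2 * Real.exp (θ * X ω)
          = θ ^ 2 / 2 * ((X ω) ^ 2 * Real.exp (θ * X ω)) := by ring
      have h7 : θ ^ 2 / 2 * ((X ω) ^ 2 * Real.exp (θ * X ω))
          ≤ θ ^ 2 / 2 * (C * Real.exp (θ₀ * X ω)) :=
        mul_le_mul_of_nonneg_left hB1 (by positivity)
      simp only [hGdef]
      nlinarith
    · have hA := exp_le_quad (θ * X ω) (mul_nonpos_of_nonneg_of_nonpos hθ0 h.le)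
      have h1 : max (-(X ω)) 0 = -(X ω) := max_eq_left (by linarith)
      have h2 : (0:ℝ) ≤ C * Real.exp (θ₀ * X ω) := by positivity
      simp only [hGdef, h1]
      nlinarith
  -- integral of the RHS
  have hRHSint : Integrable (fun ω => 1 + θ * X ω + θ ^ 2 / 2 * G ω) :=
    ((integrable_const (1:ℝ)).add (hXint.const_mul θ)).add (hG.const_mul _)
  have i1 : Integrable (fun ω => 1 + θ * X ω) :=
    (integrable_const (1:ℝ)).add (hXint.const_mul θ)
  have i2 : Integrable (fun ω => θ ^ 2 / 2 * G ω) := hG.const_mul _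
  have i3 : Integrable (fun ω => θ * X ω) := hXint.const_mul θ
  have hint : ∫ ω, (1 + θ * X ω + θ ^ 2 / 2 * G ω) = 1 + θ ^ 2 / 2 * B := by
    rw [integral_add i1 i2, integral_add (integrable_const (1:ℝ)) i3,
      integral_const, integral_const_mul, integral_const_mul, hmean]
    simp [hBdef]
  have hle : ∫ ω, Real.exp (θ * X ω) ≤ 1 + θ ^ 2 / 2 * B := by
    rw [← hint]
    exact integral_mono hexpθ hRHSint hpt
  have hpos : 0 < ∫ ω, Real.exp (θ * X ω) := integral_exp_pos hexpθ
  have hlog1 : Real.log (∫ ω, Real.exp (θ * X ω)) ≤ Real.log (1 + θ ^ 2 / 2 * B) :=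
    Real.log_le_log hpos hle
  have hlog2 : Real.log (1 + θ ^ 2 / 2 * B) ≤ θ ^ 2 / 2 * B := by
    have := Real.log_le_sub_one_of_pos (show (0:ℝ) < 1 + θ ^ 2 / 2 * B by positivity)
    linarith
  calc Real.log (∫ ω, Real.exp (θ * X ω)) ≤ θ ^ 2 / 2 * B := le_trans hlog1 hlog2
    _ = B * θ ^ 2 / 2 := by ring
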